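/- Let E be a Polish space with its Borel σ-algebra, (μ_n) and μ Borel probability measures on E with μ_n converging weakly to μ. Let h : E → ℝ be continuous, integrable with respect to each μ_n and with respect to μ, and such that ∫ |h| dμ_n → ∫ |h| dμ < ∞, and let ℓ : E → ℝ be continuous and bounded. Then ∫ h·ℓ dμ_n → ∫ h·ℓ dμ. -/

import Mathlib

open MeasureTheory Filter Topology

/-- The key uniform-integrability step in the proof of Corollary 3: if `μ n` converge
weakly to `μlim`, `h` is continuous and integrable with convergent absolute moments, and
`ℓ` is continuous and bounded, then `∫ h·ℓ dμ_n → ∫ h·ℓ dμ`. -/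
theorem integral_mul_bounded_convergence
    {E : Type*} [TopologicalSpace E] [PolishSpace E]
    [MeasurableSpace E] [BorelSpace E]
    (μ : ℕ → Measure E) (μlim : Measure E)
    [∀ n, IsProbabilityMeasure (μ n)] [IsProbabilityMeasure μlim]
    (hweak : ∀ g : BoundedContinuousFunction E ℝ,
      Tendsto (fun n => ∫ x, g x ∂(μ n)) atTop (𝓝 (∫ x, g x ∂μlim)))
    (h : E → ℝ) (hhc : Continuous h)
    (hhint : ∀ n, Integrable h (μ n)) (hhintlim : Integrable h μlim)
    (hhabs : Tendsto (fun n => ∫ x, |h x| ∂(μ n)) atTop (𝓝 (∫ x, |h x| ∂μlim)))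
    (ℓ : E → ℝ) (hℓc : Continuous ℓ) (hℓb : ∃ B : ℝ, ∀ x, |ℓ x| ≤ B) :
    Tendsto (fun n => ∫ x, h x * ℓ x ∂(μ n)) atTop (𝓝 (∫ x, h x * ℓ x ∂μlim)) := by
  classical
  obtain ⟨B, hB⟩ := hℓb
  set C : ℝ := max B 0 with hCdef
  have hC0 : (0:ℝ) ≤ C := le_max_right _ _
  have hℓC : ∀ x, |ℓ x| ≤ C := fun x => (hB x).trans (le_max_left _ _)
  -- truncation
  set T : ℝ → E → ℝ := fun M x => max (min (h x) M) (-M) with hTdef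
  set φ : ℝ → E → ℝ := fun M x => min (|h x|) M with hφdef
  have hTc : ∀ M : ℝ, Continuous (T M) := fun M =>
    (hhc.min continuous_const).max continuous_const
  have hφc : ∀ M : ℝ, Continuous (φ M) := fun M => hhc.abs.min continuous_const
  have hTabs : ∀ M : ℝ, 0 ≤ M → ∀ x, |T M x| ≤ M := by
    intro M hM x
    rw [abs_le]
    constructor
    · exact le_max_right _ _
    · exact max_le (min_le_right _ _) (by linarith)
  have hφ0 : ∀ M : ℝ, 0 ≤ M → ∀ x, 0 ≤ φ M x := fun M hM x =>
    le_min (abs_nonneg _) hM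
  have hφle : ∀ M : ℝ, ∀ x, φ M x ≤ |h x| := fun M x => min_le_left _ _
  have hdiff : ∀ M : ℝ, 0 ≤ M → ∀ x, |h x - T M x| ≤ |h x| - φ M x := by
    intro M hM x
    rcases le_total (h x) M with h1 | h1
    · rcases le_total (-M) (h x) with h2 | h2
      · have : T M x = h x := by
          simp only [hTdef, min_eq_left h1, max_eq_left h2]
        rw [this, sub_self, abs_zero]
        have := hφle M x; linarith
      · have hTx : T M x = -M := by
          simp only [hTdef]
          rw [min_eq_left h1, max_eq_right h2]
        have habs : |h x| = -(h x) := abs_of_nonpos (by linarith)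
        have hφx : φ M x = M := by
          simp only [hφdef]
          rw [min_eq_right]
          rw [habs]; linarith
        rw [hTx, hφx, habs]
        rw [abs_of_nonpos (by linarith)]
        linarith
    · have hTx : T M x = M := by
        simp only [hTdef]
        rw [min_eq_right h1, max_eq_left (by linarith)]
      have habs : |h x| = h x := abs_of_nonneg (by linarith)
      have hφx : φ M x = M := by
        simp only [hφdef]
        rw [min_eq_right]; rw [habs]; exact h1
      rw [hTx, hφx, habs, abs_of_nonneg (by linarith)]
  -- integrability facts
  have hℓint_mul : ∀ (ν : Measure E), Integrable h ν →
      Integrable (fun x => h x * ℓ x) ν := by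
    intro ν hν
    have : Integrable (fun x => ℓ x * h x) ν :=
      hν.bdd_mul (c := C) hℓc.aestronglyMeasurable (Eventually.of_forall fun x => by
        rw [Real.norm_eq_abs]; exact hℓC x)
    exact this.congr (Eventually.of_forall fun x => mul_comm _ _)
  have hφint : ∀ (M : ℝ), 0 ≤ M → ∀ (ν : Measure E), IsProbabilityMeasure ν →
      Integrable (φ M) ν := by
    intro M hM ν hν
    exact (BoundedContinuousFunction.ofNormedAddCommGroup (φ M) (hφc M) M
      (fun x => by rw [Real.norm_eq_abs, abs_of_nonneg (hφ0 M hM x)];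
                   exact min_le_right _ _)).integrable ν
  have hTℓint : ∀ (M : ℝ), 0 ≤ M → ∀ (ν : Measure E), IsProbabilityMeasure ν →
      Integrable (fun x => T M x * ℓ x) ν := by
    intro M hM ν hν
    exact (BoundedContinuousFunction.ofNormedAddCommGroup (fun x => T M x * ℓ x)
      ((hTc M).mul hℓc) (M * C)
      (fun x => by
        rw [Real.norm_eq_abs, abs_mul]
        exact mul_le_mul (hTabs M hM x) (hℓC x) (abs_nonneg _) hM)).integrable ν
  -- key error bound
  have key : ∀ (M : ℝ), 0 ≤ M → ∀ (ν : Measure E), IsProbabilityMeasure ν →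
      Integrable h ν →
      |(∫ x, h x * ℓ x ∂ν) - ∫ x, T M x * ℓ x ∂ν| ≤
        C * ((∫ x, |h x| ∂ν) - ∫ x, φ M x ∂ν) := by
    intro M hM ν hνp hν
    haveI := hνp
    rw [← integral_sub (hℓint_mul ν hν) (hTℓint M hM ν hνp)]
    have h1 : |∫ x, (h x * ℓ x - T M x * ℓ x) ∂ν| ≤
        ∫ x, |h x * ℓ x - T M x * ℓ x| ∂ν := by
      simpa [Real.norm_eq_abs] using
        norm_integral_le_integral_norm (fun x => h x * ℓ x - T M x * ℓ x) (μ := ν)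
    refine h1.trans ?_
    have h2 : ∫ x, |h x * ℓ x - T M x * ℓ x| ∂ν ≤
        ∫ x, C * (|h x| - φ M x) ∂ν := by
      apply integral_mono _ _
      · intro x
        show |h x * ℓ x - T M x * ℓ x| ≤ C * (|h x| - φ M x)
        have : h x * ℓ x - T M x * ℓ x = (h x - T M x) * ℓ x := by ring
        rw [this, abs_mul]
        calc |h x - T M x| * |ℓ x| ≤ (|h x| - φ M x) * C :=
              mul_le_mul (hdiff M hM x) (hℓC x) (abs_nonneg _)
                (by have := hφle M x; have := hdiff M hM x;
                    have := abs_nonneg (h x - T M x); linarith)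
          _ = C * (|h x| - φ M x) := mul_comm _ _
      · exact ((hℓint_mul ν hν).sub (hTℓint M hM ν hνp)).abs
      · exact ((hν.abs.sub (hφint M hM ν hνp)).const_mul C)
    refine h2.trans ?_
    rw [integral_const_mul, integral_sub hν.abs (hφint M hM ν hνp)]
  -- ∫ φ M dμlim → ∫ |h| dμlim as M → ∞ (over ℕ)
  have hφlim : Tendsto (fun k : ℕ => ∫ x, φ (k:ℝ) x ∂μlim) atTop
      (𝓝 (∫ x, |h x| ∂μlim)) := by
    apply tendsto_integral_of_dominated_convergence (fun x => |h x|)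
    · intro k; exact (hφc _).aestronglyMeasurable
    · exact hhintlim.abs
    · intro k
      filter_upwards with x
      rw [Real.norm_eq_abs, abs_of_nonneg (hφ0 _ (Nat.cast_nonneg k) x)]
      exact min_le_left _ _
    · filter_upwards with x
      have hev : ∀ᶠ k : ℕ in atTop, φ (k:ℝ) x = |h x| := by
        filter_upwards [eventually_ge_atTop ⌈|h x|⌉₊] with k hk
        exact min_eq_left ((Nat.le_ceil _).trans (by exact_mod_cast hk))
      exact Tendsto.congr' (hev.mono fun k hk => hk.symm) tendsto_const_nhds
  -- main ε argument
  rw [Metric.tendsto_atTop]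
  intro ε hε
  set δ : ℝ := ε / (4 * (C + 1)) with hδdef
  have hδ0 : 0 < δ := by positivity
  -- choose M
  have hMex : ∃ k : ℕ, (∫ x, |h x| ∂μlim) - ∫ x, φ (k:ℝ) x ∂μlim < δ := by
    have := (Metric.tendsto_atTop.1 hφlim) δ hδ0
    obtain ⟨k, hk⟩ := this
    refine ⟨k, ?_⟩
    have := hk k le_rfl
    rw [Real.dist_eq] at this
    have := abs_lt.1 this
    linarith [this.1, this.2]
  obtain ⟨k, hk⟩ := hMex
  set M : ℝ := (k : ℝ) with hMdef
  have hM0 : (0:ℝ) ≤ M := Nat.cast_nonneg k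
  -- three convergence facts in n
  have hw1 : Tendsto (fun n => ∫ x, T M x * ℓ x ∂(μ n)) atTop
      (𝓝 (∫ x, T M x * ℓ x ∂μlim)) := by
    exact hweak (BoundedContinuousFunction.ofNormedAddCommGroup
      (fun x => T M x * ℓ x) ((hTc M).mul hℓc) (M * C)
      (fun x => by
        rw [Real.norm_eq_abs, abs_mul]
        exact mul_le_mul (hTabs M hM0 x) (hℓC x) (abs_nonneg _) hM0))
  have hw2 : Tendsto (fun n => ∫ x, φ M x ∂(μ n)) atTop
      (𝓝 (∫ x, φ M x ∂μlim)) := by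
    exact hweak (BoundedContinuousFunction.ofNormedAddCommGroup (φ M) (hφc M) M
      (fun x => by rw [Real.norm_eq_abs, abs_of_nonneg (hφ0 M hM0 x)];
                   exact min_le_right _ _))
  have hw3 : Tendsto (fun n => (∫ x, |h x| ∂(μ n)) - ∫ x, φ M x ∂(μ n)) atTop
      (𝓝 ((∫ x, |h x| ∂μlim) - ∫ x, φ M x ∂μlim)) := hhabs.sub hw2
  have e1 : ∀ᶠ n in atTop,
      |(∫ x, T M x * ℓ x ∂(μ n)) - ∫ x, T M x * ℓ x ∂μlim| < δ := by
    have := (Metric.tendsto_nhds.1 hw1) δ hδ0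
    filter_upwards [this] with n hn
    rwa [Real.dist_eq] at hn
  have e2 : ∀ᶠ n in atTop,
      (∫ x, |h x| ∂(μ n)) - ∫ x, φ M x ∂(μ n) < 2 * δ := by
    have := (Metric.tendsto_nhds.1 hw3) δ hδ0
    filter_upwards [this] with n hn
    rw [Real.dist_eq] at hn
    have := abs_lt.1 hn
    linarith [this.2]
  obtain ⟨N, hN⟩ := (e1.and e2).exists_forall_of_atTop
  refine ⟨N, fun n hn => ?_⟩
  obtain ⟨hn1, hn2⟩ := hN n hn
  rw [Real.dist_eq]
  have k1 := key M hM0 (μ n) inferInstance (hhint n)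
  have k2 := key M hM0 μlim inferInstance hhintlim
  have tri : |(∫ x, h x * ℓ x ∂(μ n)) - ∫ x, h x * ℓ x ∂μlim| ≤
      |(∫ x, h x * ℓ x ∂(μ n)) - ∫ x, T M x * ℓ x ∂(μ n)| +
      |(∫ x, T M x * ℓ x ∂(μ n)) - ∫ x, T M x * ℓ x ∂μlim| +
      |(∫ x, T M x * ℓ x ∂μlim) - ∫ x, h x * ℓ x ∂μlim| := by
    have := abs_sub_le (∫ x, h x * ℓ x ∂(μ n)) (∫ x, T M x * ℓ x ∂(μ n))
      (∫ x, h x * ℓ x ∂μlim)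
    have := abs_sub_le (∫ x, T M x * ℓ x ∂(μ n)) (∫ x, T M x * ℓ x ∂μlim)
      (∫ x, h x * ℓ x ∂μlim)
    linarith
  have habs_comm : |(∫ x, T M x * ℓ x ∂μlim) - ∫ x, h x * ℓ x ∂μlim| =
      |(∫ x, h x * ℓ x ∂μlim) - ∫ x, T M x * ℓ x ∂μlim| := abs_sub_comm _ _
  have b1 : |(∫ x, h x * ℓ x ∂(μ n)) - ∫ x, T M x * ℓ x ∂(μ n)| ≤ C * (2 * δ) :=
    k1.trans (by
      apply mul_le_mul_of_nonneg_left (le_of_lt hn2) hC0)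
  have b3 : |(∫ x, T M x * ℓ x ∂μlim) - ∫ x, h x * ℓ x ∂μlim| ≤ C * δ := by
    rw [habs_comm]
    exact k2.trans (mul_le_mul_of_nonneg_left (le_of_lt hk) hC0)
  have hfin : C * (2 * δ) + δ + C * δ < ε := by
    have : δ * (4 * (C + 1)) = ε := by
      rw [hδdef]; field_simp
    nlinarith
  linarith
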